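/- Let A be a commutative ring, N ≥ 1, x_1,…,x_N ∈ A and k ∈ ℕ. Let M be the N×N matrix with entries M_{1j} = x_j^{k+N-1} for the first row and M_{ij} = x_j^{N-i} for 2 ≤ i ≤ N, and let V be the N×N matrix with entries V_{ij} = x_j^{N-i}. Then det M = h_k(x)·det V, where h_k(x) = Σ_{(k_1,…,k_N) ∈ ℕ^N, k_1+…+k_N = k} x_1^{k_1}···x_N^{k_N}. -/

import Mathlib

open Polynomial Finset

namespace SchurAux

variable {A : Type*} [CommRing A]

noncomputable def hh {N : ℕ} (x : Fin N → A) (d : ℕ) : A :=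
  ∑ m ∈ Finset.Nat.antidiagonalTuple N d, ∏ i, x i ^ m i

noncomputable def QQ {N : ℕ} (x : Fin N → A) : Polynomial A :=
  ∏ l, (1 - Polynomial.C (x l) * Polynomial.X)

lemma geom (a : A) :
    ((1 : PowerSeries A) - PowerSeries.C a * PowerSeries.X)
      * PowerSeries.mk (fun n => a ^ n) = 1 := by
  ext n
  cases n with
  | zero => simp
  | succ n =>
    simp [sub_mul, mul_assoc, PowerSeries.coeff_succ_X_mul, PowerSeries.coeff_C_mul, pow_succ']

lemma coe_QQ {N : ℕ} (x : Fin N → A) :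
    ((QQ x : Polynomial A) : PowerSeries A)
      = ∏ l, ((1 : PowerSeries A) - PowerSeries.C (x l) * PowerSeries.X) := by
  rw [QQ, ← Polynomial.coeToPowerSeries.ringHom_apply, map_prod]
  exact Finset.prod_congr rfl (fun l _ => by simp)

lemma QQ_mul_G {N : ℕ} (x : Fin N → A) :
    ((QQ x : Polynomial A) : PowerSeries A) * ∏ l, PowerSeries.mk (fun n => x l ^ n) = 1 := by
  rw [coe_QQ, ← Finset.prod_mul_distrib]
  simp [geom]

lemma coeff_G {N : ℕ} (x : Fin N → A) (d : ℕ) :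
    PowerSeries.coeff d (∏ l, PowerSeries.mk (fun n => x l ^ n)) = hh x d := by
  classical
  rw [PowerSeries.coeff_prod, hh]
  refine Finset.sum_nbij' (fun l => (l : Fin N → ℕ)) (fun m => Finsupp.equivFunOnFinite.symm m)
    ?_ ?_ ?_ ?_ ?_
  · intro l hl
    simp only [Finset.mem_finsuppAntidiag] at hl
    simp [Finset.Nat.mem_antidiagonalTuple, ← hl.1]
  · intro m hm
    simp only [Finset.Nat.mem_antidiagonalTuple] at hm
    simp only [Finset.mem_finsuppAntidiag]
    constructor
    · rw [← hm]
      exact Finset.sum_congr rfl (fun i _ => by simp)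
    · exact Finset.subset_univ _
  · intro l hl; simp
  · intro m hm
    exact Finsupp.equivFunOnFinite.apply_symm_apply m
  · intro l hl
    exact Finset.prod_congr rfl (fun i _ => by simp)

lemma natDegree_one_sub_C_mul_X' (a : A) :
    (1 - Polynomial.C a * Polynomial.X).natDegree ≤ 1 := by
  refine le_trans (Polynomial.natDegree_sub_le _ _) ?_
  simp only [Polynomial.natDegree_one, max_le_iff]
  refine ⟨Nat.zero_le _, le_trans (Polynomial.natDegree_mul_le) ?_⟩
  simp [Polynomial.natDegree_X_le]

lemma natDegree_QQ {N : ℕ} (x : Fin N → A) : (QQ x).natDegree ≤ N := by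
  refine le_trans (Polynomial.natDegree_prod_le _ _) ?_
  refine le_trans (Finset.sum_le_sum (fun l (_ : l ∈ Finset.univ) =>
    natDegree_one_sub_C_mul_X' (x l))) (by simp)

lemma coeff_QQ_zero {N : ℕ} (x : Fin N → A) : (QQ x).coeff 0 = 1 := by
  rw [Polynomial.coeff_zero_eq_eval_zero, QQ, Polynomial.eval_prod]
  simp

lemma coeff_QQ_of_gt {N : ℕ} (x : Fin N → A) {b : ℕ} (hb : N < b) : (QQ x).coeff b = 0 :=
  Polynomial.coeff_eq_zero_of_natDegree_lt (lt_of_le_of_lt (natDegree_QQ x) hb)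

lemma reflect_one_sub_C_mul_X (a : A) :
    (1 - Polynomial.C a * Polynomial.X).reflect 1 = Polynomial.X - Polynomial.C a := by
  have : (1 - Polynomial.C a * Polynomial.X : Polynomial A)
      = 1 + Polynomial.C (-a) * Polynomial.X ^ 1 := by rw [map_neg]; ring
  rw [this, Polynomial.reflect_add, Polynomial.reflect_C_mul_X_pow, Polynomial.reflect_one]
  simp only [Polynomial.revAt_le (le_refl 1)]
  rw [map_neg]
  ring

lemma natDegree_one_sub_C_mul_X (a : A) :
    (1 - Polynomial.C a * Polynomial.X).natDegree ≤ 1 := by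
  refine le_trans (Polynomial.natDegree_sub_le _ _) ?_
  simp only [Polynomial.natDegree_one, max_le_iff]
  refine ⟨Nat.zero_le _, le_trans (Polynomial.natDegree_mul_le) ?_⟩
  simp [Polynomial.natDegree_X_le]

lemma reflect_prod {ι : Type*} [DecidableEq ι] (s : Finset ι) (f : ι → A) :
    (∏ l ∈ s, (1 - Polynomial.C (f l) * Polynomial.X)).reflect s.card
      = ∏ l ∈ s, (Polynomial.X - Polynomial.C (f l)) := by
  classical
  induction s using Finset.induction_on with
  | empty => simp
  | @insert a s ha ih =>
    rw [Finset.prod_insert ha, Finset.prod_insert ha, Finset.card_insert_of_notMem ha,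
      add_comm s.card 1,
      Polynomial.reflect_mul _ _ (natDegree_one_sub_C_mul_X (f a))
        (le_trans (Polynomial.natDegree_prod_le _ _)
          (le_trans (Finset.sum_le_sum (fun l _ => natDegree_one_sub_C_mul_X (f l)))
            (by simp))),
      ih, reflect_one_sub_C_mul_X]

end SchurAux

namespace SchurAux
variable {A : Type*} [CommRing A]

lemma reflect_QQ {N : ℕ} (x : Fin N → A) :
    (QQ x).reflect N = ∏ l, (Polynomial.X - Polynomial.C (x l)) := by
  have h := reflect_prod (Finset.univ : Finset (Fin N)) x
  simpa [QQ] using h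

lemma root [Nontrivial A] {N : ℕ} (x : Fin N → A) (j : Fin N) :
    ∑ b ∈ Finset.range (N + 1), (QQ x).coeff b * (x j) ^ (N - b) = 0 := by
  have hdeg : ((QQ x).reflect N).natDegree < N + 1 := by
    rw [reflect_QQ]
    rw [Polynomial.natDegree_prod_of_monic _ _ (fun l _ => Polynomial.monic_X_sub_C (x l))]
    simp [Polynomial.natDegree_X_sub_C]
  have heval : Polynomial.eval (x j) ((QQ x).reflect N) = 0 := by
    rw [reflect_QQ, Polynomial.eval_prod]
    exact Finset.prod_eq_zero (Finset.mem_univ j) (by simp)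
  rw [Polynomial.eval_eq_sum_range' hdeg] at heval
  rw [← Finset.sum_range_reflect]
  rw [← heval]
  refine Finset.sum_congr rfl (fun i hi => ?_)
  rw [Finset.mem_range] at hi
  have hi' : i ≤ N := by omega
  rw [Polynomial.coeff_reflect, Polynomial.revAt_le hi']
  have : N + 1 - 1 - i = N - i := by omega
  rw [this]
  have : N - (N - i) = i := by omega
  rw [this]

lemma star {N : ℕ} (x : Fin N → A) (s : ℕ) :
    ∑ b ∈ Finset.range (s + 1), (QQ x).coeff b * hh x (s - b)
      = if s = 0 then 1 else 0 := by
  have h := congrArg (PowerSeries.coeff s) (QQ_mul_G x)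
  rw [PowerSeries.coeff_mul, Finset.Nat.sum_antidiagonal_eq_sum_range_succ
    (fun a b => PowerSeries.coeff a ((QQ x : Polynomial A) : PowerSeries A)
      * PowerSeries.coeff b (∏ l, PowerSeries.mk (fun n => x l ^ n)))] at h
  simp only [Polynomial.coeff_coe, coeff_G] at h
  rw [h, PowerSeries.coeff_one]

end SchurAux

namespace SchurAux
variable {A : Type*} [CommRing A]

noncomputable def cc {N : ℕ} (x : Fin N → A) (k i : ℕ) : A :=
  ∑ b ∈ Finset.range (i + 1), (QQ x).coeff b * hh x (k + i - b)

lemma cc_zero {N : ℕ} (x : Fin N → A) (k : ℕ) : cc x k 0 = hh x k := by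
  simp [cc, coeff_QQ_zero]

lemma cc_top {N : ℕ} (hN : 0 < N) (x : Fin N → A) (k : ℕ) : cc x k N = 0 := by
  have hstar := star x (k + N)
  rw [if_neg (by omega)] at hstar
  rw [cc, ← hstar]
  refine Finset.sum_subset (Finset.range_subset_range.2 (by omega)) (fun b _ hb => ?_)
  rw [Finset.mem_range, not_lt] at hb
  rw [coeff_QQ_of_gt x (by omega), zero_mul]

lemma cc_succ {N : ℕ} (x : Fin N → A) (k i : ℕ) :
    cc x k (i + 1) = cc x (k + 1) i + (QQ x).coeff (i + 1) * hh x k := by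
  rw [cc, cc, Finset.sum_range_succ]
  congr 1
  · refine Finset.sum_congr rfl (fun b hb => ?_)
    rw [Finset.mem_range] at hb
    congr 2
    omega
  · congr 2
    omega

lemma A4 [Nontrivial A] {n : ℕ} (x : Fin (n + 1) → A) (k : ℕ) (j : Fin (n + 1)) :
    ∑ i ∈ Finset.range (n + 1), cc x k i * (x j) ^ (n - i) = (x j) ^ (n + k) := by
  induction k with
  | zero =>
    have hcc : ∀ i, cc x 0 i = if i = 0 then 1 else 0 := by
      intro i
      rw [← star x i, cc]
      exact Finset.sum_congr rfl (fun b hb => by rw [Nat.zero_add])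
    rw [Finset.sum_eq_single 0 (fun i _ hi => by rw [hcc, if_neg hi, zero_mul])
      (fun h => absurd (Finset.mem_range.2 (by omega)) h)]
    rw [hcc, if_pos rfl, one_mul, Nat.sub_zero, Nat.add_zero]
  | succ k ih =>
    have hmul : (x j) ^ (n + (k + 1)) = ∑ i ∈ Finset.range (n + 1), cc x k i * (x j) ^ (n + 1 - i) := by
      rw [show n + (k + 1) = (n + k) + 1 by ring, pow_succ, ← ih, Finset.sum_mul]
      refine Finset.sum_congr rfl (fun i hi => ?_)
      rw [Finset.mem_range] at hi
      rw [mul_assoc, ← pow_succ]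
      congr 2
      omega
    have hr : (x j) ^ (n + 1) + ∑ i ∈ Finset.range (n + 1), (QQ x).coeff (i + 1) * (x j) ^ (n - i) = 0 := by
      have h0 := root x j
      rw [Finset.sum_range_succ'] at h0
      simp only [coeff_QQ_zero, one_mul, Nat.sub_zero, Nat.succ_sub_succ] at h0
      linear_combination h0
    calc ∑ i ∈ Finset.range (n + 1), cc x (k + 1) i * (x j) ^ (n - i)
        = ∑ i ∈ Finset.range (n + 1),
            (cc x k (i + 1) - (QQ x).coeff (i + 1) * hh x k) * (x j) ^ (n - i) := by
          refine Finset.sum_congr rfl (fun i _ => ?_)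
          rw [cc_succ]
          ring
      _ = (∑ i ∈ Finset.range (n + 1), cc x k (i + 1) * (x j) ^ (n - i))
            - hh x k * ∑ i ∈ Finset.range (n + 1), (QQ x).coeff (i + 1) * (x j) ^ (n - i) := by
          rw [Finset.mul_sum, ← Finset.sum_sub_distrib]
          refine Finset.sum_congr rfl (fun i _ => by ring)
      _ = (∑ i ∈ Finset.range n, cc x k (i + 1) * (x j) ^ (n - i)) + hh x k * (x j) ^ (n + 1) := by
          rw [Finset.sum_range_succ, cc_top (by omega) x k, zero_mul, add_zero]
          have : ∑ i ∈ Finset.range (n + 1), (QQ x).coeff (i + 1) * (x j) ^ (n - i)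
              = - (x j) ^ (n + 1) := by linear_combination hr
          rw [this]
          ring
      _ = ∑ i ∈ Finset.range (n + 1), cc x k i * (x j) ^ (n + 1 - i) := by
          rw [Finset.sum_range_succ']
          congr 1
          · refine Finset.sum_congr rfl (fun i hi => ?_)
            congr 2
            omega
          · rw [cc_zero, Nat.sub_zero]
      _ = (x j) ^ (n + (k + 1)) := hmul.symm

end SchurAux



/-- the Schur polynomial of the partition `(k, 0, …, 0)` in bialternant
form equals the complete homogeneous symmetric polynomial `h_k`, multiplied through by
the Vandermonde determinant: `det M = h_k(x) · det V`, where `M` has first row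
`x_j^{k+N-1}` and remaining rows `x_j^{N-i}` (`2 ≤ i ≤ N`, `1`-based; `0`-based this
exponent is `N - 1 - i`), and `V_{ij} = x_j^{N-i}`. -/
theorem schur_row_eq_complete_homogeneous
    {A : Type*} [CommRing A] (N : ℕ) (hN : 1 ≤ N) (x : Fin N → A) (k : ℕ) :
    (Matrix.of fun i j : Fin N =>
        if (i : ℕ) = 0 then x j ^ (k + N - 1) else x j ^ (N - 1 - (i : ℕ))).det =
      (∑ m ∈ Finset.Nat.antidiagonalTuple N k, ∏ i, x i ^ m i) *
        (Matrix.of fun i j : Fin N => x j ^ (N - 1 - (i : ℕ))).det := by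

  rcases subsingleton_or_nontrivial A with hA | hA
  · apply Subsingleton.elim
  obtain ⟨n, rfl⟩ : ∃ n, N = n + 1 := ⟨N - 1, by omega⟩
  classical
  set V : Matrix (Fin (n + 1)) (Fin (n + 1)) A :=
    Matrix.of fun i j : Fin (n + 1) => x j ^ (n + 1 - 1 - (i : ℕ)) with hV
  have hrow : (Matrix.of fun i j : Fin (n + 1) =>
      if (i : ℕ) = 0 then x j ^ (k + (n + 1) - 1) else x j ^ (n + 1 - 1 - (i : ℕ)))
      = V.updateRow 0 (∑ r : Fin (n + 1), SchurAux.cc x k (r : ℕ) • V r) := by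
    ext i j
    by_cases hi : (i : ℕ) = 0
    · have hi0 : i = 0 := Fin.ext (by simpa using hi)
      subst hi0
      rw [Matrix.updateRow_self]
      simp only [Matrix.of_apply, if_pos rfl, Finset.sum_apply, Pi.smul_apply, smul_eq_mul,
        hV, Nat.add_sub_cancel]
      rw [Fin.sum_univ_eq_sum_range (fun r => SchurAux.cc x k r * x j ^ (n - r)),
        SchurAux.A4 x k j, show k + (n + 1) - 1 = n + k by omega]
      simp
    · have hi0 : i ≠ 0 := fun h => hi (by rw [h]; rfl)
      rw [Matrix.updateRow_ne hi0]
      simp only [Matrix.of_apply, if_neg hi, hV]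
  rw [hrow, Matrix.det_updateRow_sum]
  have h0 : ((0 : Fin (n + 1)) : ℕ) = 0 := rfl
  rw [h0, SchurAux.cc_zero, smul_eq_mul]
  rfl
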